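/- arXiv:1101.0031 — 3 statements merged into one kernel-verified Lean document; each statement's English description precedes it below -/
import Mathlib

section
/- Suppose V(Z_t − z⁰) converges P-almost surely to a finite limit for any initial value Z_0 and Σ_{t=1}^∞ [N_t(Δ_{t-1})]⁻ < ∞ P-almost surely. Suppose also that for each ε ∈ (0,1) there exists δ > 0 such that inf{ V(u) : ‖u‖ ≥ ε, z⁰ + u ∈ U_t } > δ eventually, and that condition (C) holds: for each ε ∈ (0,1), Σ_{t=1}^∞ inf{ [N_t(u)]⁻ : ε ≤ V(u) ≤ 1/ε, z⁰ + u ∈ U_{t−1} } = ∞ P-almost surely. Then Z_t → z⁰ P-almost surely, for any initial value Z_0. -/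
open MeasureTheory Filter
open scoped Topology

/-- The positive part `[a]⁺ = max a 0`. -/
noncomputable def posPart' (a : ℝ) : ℝ := max a 0

/-- The negative part `[a]⁻ = max (−a) 0`. -/
noncomputable def negPart' (a : ℝ) : ℝ := max (-a) 0

/-- The infimum of a set of reals, with the convention that the infimum over the empty set
is `1`. -/
noncomputable def infOr1 (S : Set ℝ) : ℝ :=
  letI := Classical.propDecidable S.Nonempty
  if S.Nonempty then sInf S else 1


lemma negPart'_nonneg (a : ℝ) : 0 ≤ negPart' a := le_max_right _ _

lemma infOr1_le_of_mem {S : Set ℝ} (h0 : ∀ x ∈ S, (0:ℝ) ≤ x) {a : ℝ} (ha : a ∈ S) :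
    infOr1 S ≤ a := by
  unfold infOr1
  rw [if_pos ⟨a, ha⟩]
  exact csInf_le ⟨0, h0⟩ ha

/-- Lemma 2: if `V(Z_t − z⁰)` converges a.s. to a finite limit for any initial value and
`Σ_t [N_t(Δ_{t−1})]⁻ < ∞` a.s., and conditions (2.8) and (C) hold, then `Z_t → z⁰` a.s.
Time is indexed so that step `t+1` of the paper's procedure (using `𝓕_t`-measurable data)
updates `Z t` to `Z (t+1)`; `N t u` is the paper's `N_{t+1}(u)`. -/
theorem stmt_1 {Ω : Type*} {m0 : MeasurableSpace Ω} (P : Measure Ω) [IsProbabilityMeasure P]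
    (ℱ : Filtration ℕ m0) (m : ℕ)
    -- the random fields R, ε and the matrix-valued (linear-map-valued) step sizes γ
    (R eps : ℕ → EuclideanSpace ℝ (Fin m) → Ω → EuclideanSpace ℝ (Fin m))
    (γ : ℕ → EuclideanSpace ℝ (Fin m) → Ω →
      (EuclideanSpace ℝ (Fin m) →L[ℝ] EuclideanSpace ℝ (Fin m)))
    (Ψ : ℕ → EuclideanSpace ℝ (Fin m) → Ω → EuclideanSpace ℝ (Fin m))
    (hΨ : ∀ t z ω, Ψ t z ω = R t z ω + eps t z ω)
    -- predictability of `R` and `γ`, adaptedness and martingale-difference property of `ε`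
    (hRmeas : ∀ t z, StronglyMeasurable[ℱ t] (R (t + 1) z))
    (hγmeas : ∀ t z, StronglyMeasurable[ℱ t] (γ (t + 1) z))
    (hεmeas : ∀ t z, StronglyMeasurable[ℱ (t + 1)] (eps (t + 1) z))
    (hεint : ∀ t z, Integrable (eps (t + 1) z) P)
    (hεmd : ∀ t z, P[eps (t + 1) z|ℱ t] =ᵐ[P] 0)
    -- the root: `R_t(z⁰) = 0`
    (z0 : EuclideanSpace ℝ (Fin m)) (hR0 : ∀ t ω, R (t + 1) z0 ω = 0)
    -- admissible truncation sets
    (U : ℕ → Ω → Set (EuclideanSpace ℝ (Fin m)))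
    (hUclosed : ∀ t ω, IsClosed (U t ω)) (hUconvex : ∀ t ω, Convex ℝ (U t ω))
    (hUne : ∀ t ω, (U t ω).Nonempty)
    (hUz0 : ∀ᵐ ω ∂P, ∃ t₀ : ℕ, ∀ t > t₀, z0 ∈ U t ω)
    -- the truncated procedure: `Z (t+1)` is the metric projection onto `U (t+1)` of
    -- `Z t + γ_{t+1}(Z t) Ψ_{t+1}(Z t)`
    (Z : ℕ → Ω → EuclideanSpace ℝ (Fin m))
    (hZadapted : ∀ t, StronglyMeasurable[ℱ t] (Z t))
    (hZmem : ∀ t ω, Z (t + 1) ω ∈ U (t + 1) ω)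
    (hZproj : ∀ t ω, ∀ y ∈ U (t + 1) ω,
      dist (Z (t + 1) ω) (Z t ω + γ (t + 1) (Z t ω) ω (Ψ (t + 1) (Z t ω) ω)) ≤
        dist y (Z t ω + γ (t + 1) (Z t ω) ω (Ψ (t + 1) (Z t ω) ω)))
    -- the conditional expectation conditions (2.3) and (2.4), assumed finite
    (hΨint : ∀ t, Integrable (fun ω => Ψ (t + 1) (Z t ω) ω) P)
    (hΨsqint : ∀ t z, Integrable (fun ω => ‖γ (t + 1) z ω (Ψ (t + 1) z ω)‖ ^ 2) P)
    (hεsqint : ∀ t z, Integrable (fun ω => ‖eps (t + 1) z ω‖ ^ 2) P)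
    (hCE1 : ∀ t, P[fun ω => Ψ (t + 1) (Z t ω) ω|ℱ t] =ᵐ[P] fun ω => R (t + 1) (Z t ω) ω)
    (hCE2 : ∀ t, P[fun ω => ‖eps (t + 1) (Z t ω) ω‖ ^ 2|ℱ t] =ᵐ[P]
      fun ω => (P[fun ω' => ‖eps (t + 1) (Z t ω) ω'‖ ^ 2|ℱ t]) ω)
    -- the Lyapunov function `V`: nonnegative, with continuous bounded second derivatives
    (V : EuclideanSpace ℝ (Fin m) → ℝ)
    (hVnn : ∀ u, 0 ≤ V u) (hVsmooth : ContDiff ℝ 2 V)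
    (hVbdd : ∃ C : ℝ, ∀ v, ‖iteratedFDeriv ℝ 2 V v‖ ≤ C)
    -- the process `N_t(u)` of the paper
    (N : ℕ → EuclideanSpace ℝ (Fin m) → Ω → ℝ)
    (hN : ∀ t u ω, N t u ω =
      fderiv ℝ V u (γ (t + 1) (z0 + u) ω (R (t + 1) (z0 + u) ω)) +
        (1 / 2) * (⨆ v, ‖iteratedFDeriv ℝ 2 V v‖) *
          (P[fun ω' => ‖γ (t + 1) (z0 + u) ω' (Ψ (t + 1) (z0 + u) ω')‖ ^ 2|ℱ t]) ω)
    -- `V(Z_t − z⁰)` converges a.s. to a finite limit (for the given initial value)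
    (hVconv : ∀ᵐ ω ∂P, ∃ L : ℝ, Tendsto (fun t => V (Z t ω - z0)) atTop (𝓝 L))
    -- `Σ_t [N_t(Δ_{t−1})]⁻ < ∞` a.s.
    (hNconv : ∀ᵐ ω ∂P, Summable fun t : ℕ => negPart' (N t (Z t ω - z0) ω))
    -- condition (2.8): for each `ε ∈ (0,1)`, eventually
    -- `inf { V(u) : ‖u‖ ≥ ε, z⁰ + u ∈ U_t } > δ > 0` for some `δ`
    (hVV : ∀ ε ∈ Set.Ioo (0 : ℝ) 1, ∃ δ > (0 : ℝ), ∀ᵐ ω ∂P, ∃ t₀ : ℕ, ∀ t > t₀,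
      δ < infOr1 (V '' {u | ε ≤ ‖u‖ ∧ z0 + u ∈ U t ω}))
    -- condition (C): for each `ε ∈ (0,1)`,
    -- `Σ_t inf { [N_t(u)]⁻ : ε ≤ V(u) ≤ 1/ε, z⁰ + u ∈ U_{t−1} } = ∞` a.s.
    (hC : ∀ ε ∈ Set.Ioo (0 : ℝ) 1, ∀ᵐ ω ∂P,
      Tendsto (fun n => ∑ t ∈ Finset.range n,
        infOr1 ((fun u => negPart' (N t u ω)) '' {u | ε ≤ V u ∧ V u ≤ 1 / ε ∧ z0 + u ∈ U t ω}))
        atTop atTop) :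
    ∀ᵐ ω ∂P, Tendsto (fun t => Z t ω) atTop (𝓝 z0) := by
  have hIoo : ∀ k : ℕ, (1 : ℝ) / (k + 2) ∈ Set.Ioo (0 : ℝ) 1 := by
    intro k
    constructor
    · positivity
    · rw [div_lt_one (by positivity)]
      have : (0 : ℝ) ≤ (k : ℝ) := Nat.cast_nonneg k
      linarith
  choose δ hδpos hδae using fun k : ℕ => hVV (1 / (k + 2)) (hIoo k)
  have hCk := fun k : ℕ => hC (1 / (k + 2)) (hIoo k)
  filter_upwards [hVconv, hNconv, ae_all_iff.2 hδae, ae_all_iff.2 hCk] with ω hVω hSω hδω hCω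
  obtain ⟨L, hL⟩ := hVω
  set Δ : ℕ → EuclideanSpace ℝ (Fin m) := fun t => Z t ω - z0 with hΔdef
  have hmemU : ∀ t : ℕ, 1 ≤ t → z0 + Δ t ∈ U t ω := by
    intro t ht
    have hz : z0 + Δ t = Z t ω := by simp [hΔdef]
    rw [hz]
    match t, ht with
    | (s + 1), _ => exact hZmem s ω
  have hLnn : 0 ≤ L := ge_of_tendsto' hL fun t => hVnn _
  -- Step 1: L = 0
  have hL0 : L = 0 := by
    by_contra hne
    have hLpos : 0 < L := lt_of_le_of_ne hLnn (Ne.symm hne)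
    obtain ⟨k, hk⟩ := exists_nat_gt (max (2 / L) L)
    have hk2 : max (2 / L) L < (k : ℝ) + 2 := by linarith
    set ε : ℝ := 1 / ((k : ℝ) + 2) with hεdef
    have hkpos : (0 : ℝ) < (k : ℝ) + 2 := by positivity
    have hεle : ε ≤ L / 2 := by
      rw [hεdef, div_le_div_iff₀ hkpos (by norm_num)]
      have h1 : 2 / L < (k : ℝ) + 2 := lt_of_le_of_lt (le_max_left _ _) hk2
      rw [div_lt_iff₀ hLpos] at h1
      linarith
    have hLle : L + 1 ≤ 1 / ε := by
      rw [hεdef, one_div_one_div]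
      have := lt_of_le_of_lt (le_max_right _ _) hk
      linarith
    have hev1 : ∀ᶠ t in atTop, L / 2 < V (Δ t) :=
      hL.eventually (eventually_gt_nhds (by linarith))
    have hev2 : ∀ᶠ t in atTop, V (Δ t) < L + 1 :=
      hL.eventually (eventually_lt_nhds (by linarith))
    obtain ⟨t0, ht0⟩ := ((hev1.and hev2).and (eventually_ge_atTop 1)).exists_forall_of_atTop
    set a : ℕ → ℝ := fun t => negPart' (N t (Δ t) ω) with hadef
    set b : ℕ → ℝ := fun t => infOr1 ((fun u => negPart' (N t u ω)) ''
      {u | ε ≤ V u ∧ V u ≤ 1 / ε ∧ z0 + u ∈ U t ω}) with hbdef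
    have hble : ∀ t, t0 ≤ t → b t ≤ a t := by
      intro t ht
      obtain ⟨⟨h1, h2⟩, h3⟩ := ht0 t ht
      refine infOr1_le_of_mem ?_ ⟨Δ t, ⟨le_of_lt (lt_of_le_of_lt hεle h1), le_of_lt (lt_of_lt_of_le h2 hLle), hmemU t h3⟩, rfl⟩
      rintro x ⟨u, _, rfl⟩
      exact negPart'_nonneg _
    set C : ℝ := (∑ t ∈ Finset.range t0, b t) + ∑' t, a t with hCdef
    obtain ⟨n, hn1, hn2⟩ :=
      (((hCω k).eventually_ge_atTop (C + 1)).and (eventually_ge_atTop t0)).exists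
    have hsum : ∑ t ∈ Finset.range n, b t ≤ C := by
      rw [← Finset.sum_range_add_sum_Ico b hn2, hCdef]
      gcongr
      calc ∑ t ∈ Finset.Ico t0 n, b t ≤ ∑ t ∈ Finset.Ico t0 n, a t := by
            refine Finset.sum_le_sum fun t ht => hble t (Finset.mem_Ico.mp ht).1
        _ ≤ ∑' t, a t := Summable.sum_le_tsum _ (fun t _ => negPart'_nonneg _) hSω
    have : C + 1 ≤ ∑ t ∈ Finset.range n, b t := hn1
    linarith
  rw [hL0] at hL
  -- Step 2: conclude Z t → z0
  rw [Metric.tendsto_atTop]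
  intro ε' hε'
  obtain ⟨k, hk⟩ := exists_nat_gt (1 / ε')
  have hεk : (1 : ℝ) / ((k : ℝ) + 2) < ε' := by
    rw [div_lt_iff₀ (by positivity)]
    rw [div_lt_iff₀ hε'] at hk
    nlinarith
  obtain ⟨t0, ht0⟩ := hδω k
  obtain ⟨t1, ht1⟩ :=
    (hL.eventually (eventually_lt_nhds (hδpos k))).exists_forall_of_atTop
  refine ⟨max t0 t1 + 1, fun t ht => ?_⟩
  have ht0' : t0 < t := by omega
  have ht1' : t1 ≤ t := by omega
  have h1t : 1 ≤ t := by omega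
  have hlt : ‖Δ t‖ < 1 / ((k : ℝ) + 2) := by
    by_contra hge
    push_neg at hge
    have hmem : V (Δ t) ∈ V '' {u | 1 / ((k : ℝ) + 2) ≤ ‖u‖ ∧ z0 + u ∈ U t ω} :=
      ⟨Δ t, ⟨hge, hmemU t h1t⟩, rfl⟩
    have hle : infOr1 (V '' {u | 1 / ((k : ℝ) + 2) ≤ ‖u‖ ∧ z0 + u ∈ U t ω}) ≤ V (Δ t) := by
      refine infOr1_le_of_mem ?_ hmem
      rintro x ⟨u, _, rfl⟩
      exact hVnn u
    have h2 := ht0 t ht0'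
    have h3 := ht1 t ht1'
    linarith
  calc dist (Z t ω) z0 = ‖Δ t‖ := dist_eq_norm _ _
    _ < ε' := lt_trans hlt hεk
end

section
/- Let l be an odd positive integer, z⁰ ∈ ℝ, and R(z) = −(z − z⁰)^l. Let (α_t) be a sequence of positive numbers with α_t → ∞, and let (γ_t) be a sequence of positive numbers such that Σ_{t=1}^∞ γ_t = ∞ and Σ_{t=1}^∞ α_{t−1}^{2l} γ_t² < ∞. Suppose the error terms satisfy Σ_{t=1}^∞ σ_t² γ_t² < ∞ P-almost surely, where σ_t² = E{ε_t² | 𝓕_{t−1}}. Then the truncated procedure Z_t = [Z_{t−1} + γ_t (R(Z_{t−1}) + ε_t)]_{−α_t}^{α_t}, t = 1, 2, …, converges P-almost surely to z⁰, for any initial value Z_0. -/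
open MeasureTheory Filter
open scoped Topology ENNReal NNReal

/-- The truncation (clamping) operator `[v]_a^b = max a (min v b)`. -/
noncomputable def truncate (a b v : ℝ) : ℝ := max a (min v b)

lemma truncate_mem {a b : ℝ} (h : a ≤ b) (v : ℝ) :
    a ≤ truncate a b v ∧ truncate a b v ≤ b :=
  ⟨le_max_left _ _, max_le h (min_le_right _ _)⟩

lemma truncate_le_self_of_lt {a b v z0 : ℝ} (ha : a ≤ z0)
    (h : z0 < truncate a b v) : truncate a b v ≤ v := by
  have h1 : truncate a b v ≤ max a v :=
    max_le_max le_rfl (min_le_left _ _)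
  rcases le_total v a with hva | hav
  · rw [max_eq_left hva] at h1; linarith
  · rwa [max_eq_right hav] at h1

lemma self_le_truncate_of_gt {a b v z0 : ℝ} (hb : z0 ≤ b)
    (h : truncate a b v < z0) : v ≤ truncate a b v := by
  have h1 : min v b ≤ truncate a b v := le_max_right _ _
  rcases le_total v b with hvb | hbv
  · rwa [min_eq_left hvb] at h1
  · rw [min_eq_right hbv] at h1; linarith

/-- Deterministic (pathwise) convergence of the truncated Robbins–Monro procedure. -/
lemma det_conv (l : ℕ) (hl : Odd l) (z0 : ℝ)
    (α γ e Z : ℕ → ℝ)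
    (hαpos : ∀ t, 0 < α t)
    (hγpos : ∀ t, 0 < γ t)
    (hγdiv : Tendsto (fun n => ∑ t ∈ Finset.range n, γ (t + 1)) atTop atTop)
    (hb : Tendsto (fun t => γ (t + 1) * (α t + |z0|) ^ l) atTop (𝓝 0))
    (hG : ∃ L, Tendsto (fun n => ∑ t ∈ Finset.range n, γ (t + 1) * e (t + 1)) atTop (𝓝 L))
    (hα0 : ∀ᶠ t in atTop, |z0| ≤ α t)
    (hZrec : ∀ t, Z (t + 1) =
      truncate (-(α (t + 1))) (α (t + 1)) (Z t + γ (t + 1) * (-(Z t - z0) ^ l + e (t + 1)))) :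
    Tendsto Z atTop (𝓝 z0) := by
  classical
  set Γ : ℕ → ℝ := fun n => ∑ t ∈ Finset.range n, γ (t + 1) with hΓdef
  set G : ℕ → ℝ := fun n => ∑ t ∈ Finset.range n, γ (t + 1) * e (t + 1) with hGdef
  have hΓs : ∀ n, Γ (n + 1) = Γ n + γ (n + 1) := fun n => Finset.sum_range_succ _ n
  have hGs : ∀ n, G (n + 1) = G n + γ (n + 1) * e (n + 1) := fun n => Finset.sum_range_succ _ n
  have hZbd : ∀ t, |Z (t + 1)| ≤ α (t + 1) := by
    intro t
    have hle : -(α (t + 1)) ≤ α (t + 1) := by have := hαpos (t + 1); linarith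
    have := truncate_mem hle (Z t + γ (t + 1) * (-(Z t - z0) ^ l + e (t + 1)))
    rw [← hZrec t] at this
    exact abs_le.2 ⟨this.1, this.2⟩
  rw [Metric.tendsto_atTop]
  intro ε hε
  set η : ℝ := ε / 5 with hηdef
  have hη : 0 < η := by positivity
  -- choose T
  have h2 : ∀ᶠ t in atTop, γ (t + 1) * (α t + |z0|) ^ l ≤ η / 2 :=
    hb.eventually (eventually_le_nhds (by linarith))
  obtain ⟨T₁, hT₁⟩ := eventually_atTop.mp (hα0.and h2)
  obtain ⟨L, hL⟩ := hG
  obtain ⟨T₂, hT₂⟩ := Metric.tendsto_atTop.mp hL (η / 4) (by positivity)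
  set T : ℕ := max (max T₁ T₂) 1 with hTdef
  have hT1 : 1 ≤ T := le_max_right _ _
  have hTα : ∀ t, T ≤ t → |z0| ≤ α t := fun t ht =>
    (hT₁ t (le_trans (le_trans (le_max_left _ _) (le_max_left _ _)) ht)).1
  have hTb : ∀ t, T ≤ t → γ (t + 1) * (α t + |z0|) ^ l ≤ η / 2 := fun t ht =>
    (hT₁ t (le_trans (le_trans (le_max_left _ _) (le_max_left _ _)) ht)).2
  have hTG : ∀ m n, T ≤ m → T ≤ n → |G n - G m| ≤ η / 2 := by
    intro m n hm hn
    have h1 := hT₂ n (le_trans (le_trans (le_max_right _ _) (le_max_left _ _)) hn)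
    have h2 := hT₂ m (le_trans (le_trans (le_max_right _ _) (le_max_left _ _)) hm)
    rw [Real.dist_eq] at h1 h2
    calc |G n - G m| ≤ |G n - L| + |L - G m| := abs_sub_le _ _ _
      _ ≤ η / 4 + η / 4 := by
          rw [abs_sub_comm L (G m)]; exact add_le_add h1.le h2.le
      _ = η / 2 := by ring
  -- drift and noise bounds
  set D : ℕ → ℝ := fun t => γ (t + 1) * (Z t - z0) ^ l with hDdef
  set N : ℕ → ℝ := fun t => γ (t + 1) * e (t + 1) with hNdef
  set pre : ℕ → ℝ := fun t => Z t + γ (t + 1) * (-(Z t - z0) ^ l + e (t + 1)) with hpredef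
  have hpre_eq : ∀ t, pre t = Z t - D t + N t := by intro t; simp only [hpredef, hDdef, hNdef]; ring
  have hdrift : ∀ t, T ≤ t → |D t| ≤ η / 2 := by
    intro t ht
    obtain ⟨s, rfl⟩ : ∃ s, t = s + 1 := ⟨t - 1, by omega⟩
    have h1 : |Z (s + 1) - z0| ≤ α (s + 1) + |z0| := by
      calc |Z (s + 1) - z0| ≤ |Z (s + 1)| + |z0| := abs_sub _ _
        _ ≤ α (s + 1) + |z0| := by have := hZbd s; linarith
    have h2 : |Z (s + 1) - z0| ^ l ≤ (α (s + 1) + |z0|) ^ l :=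
      pow_le_pow_left₀ (abs_nonneg _) h1 l
    have h3 : |D (s + 1)| = γ (s + 2) * |Z (s + 1) - z0| ^ l := by
      rw [hDdef]; rw [abs_mul, abs_of_pos (hγpos _), abs_pow]
    rw [h3]
    calc γ (s + 2) * |Z (s + 1) - z0| ^ l ≤ γ (s + 2) * (α (s + 1) + |z0|) ^ l :=
          mul_le_mul_of_nonneg_left h2 (hγpos _).le
      _ ≤ η / 2 := hTb (s + 1) ht
  have hnoise : ∀ t, T ≤ t → |N t| ≤ η / 2 := by
    intro t ht
    have : N t = G (t + 1) - G t := by rw [hGs t]; ring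
    rw [this]
    exact hTG t (t + 1) ht (le_trans ht (Nat.le_succ t))
  have hup : ∀ t, T ≤ t → z0 < Z (t + 1) → Z (t + 1) ≤ pre t := by
    intro t ht h
    have ha : -(α (t + 1)) ≤ z0 := by
      have := hTα (t + 1) (le_trans ht (Nat.le_succ t))
      have := neg_abs_le z0; linarith
    rw [hZrec t] at h ⊢
    exact truncate_le_self_of_lt ha h
  have hdn : ∀ t, T ≤ t → Z (t + 1) < z0 → pre t ≤ Z (t + 1) := by
    intro t ht h
    have hb' : z0 ≤ α (t + 1) :=
      le_trans (le_abs_self z0) (hTα (t + 1) (le_trans ht (Nat.le_succ t)))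
    rw [hZrec t] at h ⊢
    exact self_le_truncate_of_gt hb' h
  have hpowpos : 0 < (2 * η) ^ l := by positivity
  -- Claim 1: cannot stay above the band
  have claim1 : ∀ u, T ≤ u → ∃ v, u ≤ v ∧ Z v ≤ z0 + 2 * η := by
    intro u hu
    by_contra hcon
    push_neg at hcon
    have key : ∀ n, u ≤ n → Z n ≤ Z u - (2 * η) ^ l * (Γ n - Γ u) + (G n - G u) := by
      intro n hn
      induction n, hn using Nat.le_induction with
      | base => simp
      | succ n hn ih =>
        have hTn : T ≤ n := le_trans hu hn
        have h1 : z0 < Z (n + 1) := by have := hcon (n + 1) (le_trans hn (Nat.le_succ n)); linarith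
        have h2 := hup n hTn h1
        rw [hpre_eq n] at h2
        have h3 : (2 * η) ^ l ≤ (Z n - z0) ^ l := by
          apply pow_le_pow_left₀ (by positivity)
          have := hcon n hn; linarith
        have h4 : γ (n + 1) * (2 * η) ^ l ≤ D n :=
          mul_le_mul_of_nonneg_left h3 (hγpos _).le
        have h5 : N n = G (n + 1) - G n := by rw [hGs n]; ring
        have h6 : Γ (n + 1) = Γ n + γ (n + 1) := hΓs n
        nlinarith [hγpos (n + 1), hpowpos]
    have htend : Tendsto (fun n => (2 * η) ^ l * (Γ n - Γ u)) atTop atTop := by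
      apply Tendsto.const_mul_atTop hpowpos
      exact tendsto_atTop_add_const_right _ _ hγdiv
    obtain ⟨n, hn1, hn2⟩ :=
      ((htend.eventually_ge_atTop (Z u - z0 - 2 * η + η / 2 + 1)).and
        (eventually_ge_atTop u)).exists
    have h7 := key n hn2
    have h8 : |G n - G u| ≤ η / 2 := hTG u n hu (le_trans hu hn2)
    have h9 := hcon n hn2
    have := abs_le.1 h8
    linarith
  -- Claim 1': cannot stay below the band
  have claim1' : ∀ u, T ≤ u → ∃ v, u ≤ v ∧ z0 - 2 * η ≤ Z v := by
    intro u hu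
    by_contra hcon
    push_neg at hcon
    have key : ∀ n, u ≤ n → Z u + (2 * η) ^ l * (Γ n - Γ u) + (G n - G u) ≤ Z n := by
      intro n hn
      induction n, hn using Nat.le_induction with
      | base => simp
      | succ n hn ih =>
        have hTn : T ≤ n := le_trans hu hn
        have h1 : Z (n + 1) < z0 := by have := hcon (n + 1) (le_trans hn (Nat.le_succ n)); linarith
        have h2 := hdn n hTn h1
        rw [hpre_eq n] at h2
        have h3 : (Z n - z0) ^ l ≤ -(2 * η) ^ l := by
          have hzn : 2 * η ≤ z0 - Z n := by have := hcon n hn; linarith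
          have h3a : (2 * η) ^ l ≤ (z0 - Z n) ^ l := pow_le_pow_left₀ (by positivity) hzn l
          have h3b : (Z n - z0) ^ l = -(z0 - Z n) ^ l := by
            rw [show Z n - z0 = -(z0 - Z n) by ring, hl.neg_pow]
          linarith
        have h4 : D n ≤ -(γ (n + 1) * (2 * η) ^ l) := by
          have := mul_le_mul_of_nonneg_left h3 (hγpos (n + 1)).le
          rw [hDdef]; simp only at this ⊢; linarith [this]
        have h5 : N n = G (n + 1) - G n := by rw [hGs n]; ring
        have h6 : Γ (n + 1) = Γ n + γ (n + 1) := hΓs n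
        nlinarith [hγpos (n + 1), hpowpos]
    have htend : Tendsto (fun n => (2 * η) ^ l * (Γ n - Γ u)) atTop atTop := by
      apply Tendsto.const_mul_atTop hpowpos
      exact tendsto_atTop_add_const_right _ _ hγdiv
    obtain ⟨n, hn1, hn2⟩ :=
      ((htend.eventually_ge_atTop (z0 - 2 * η - Z u + η / 2 + 1)).and
        (eventually_ge_atTop u)).exists
    have h7 := key n hn2
    have h8 : |G n - G u| ≤ η / 2 := hTG u n hu (le_trans hu hn2)
    have h9 := hcon n hn2
    have := abs_le.1 h8
    linarith
  -- Claim 2 : the band is reached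
  have claim2 : ∃ u, T ≤ u ∧ |Z u - z0| ≤ 2 * η := by
    obtain ⟨v1, hv1T, hv1⟩ := claim1 T le_rfl
    have hTv1 : T ≤ v1 := hv1T
    rcases le_or_gt (z0 - 2 * η) (Z v1) with hc | hc
    · exact ⟨v1, hTv1, abs_le.2 ⟨by linarith, by linarith⟩⟩
    · obtain ⟨v, hvv1, hv⟩ := claim1' v1 hTv1
      have hex : ∃ t, v1 ≤ t ∧ z0 - 2 * η ≤ Z t := ⟨v, hvv1, hv⟩
      obtain ⟨hwv1, hwZ⟩ := Nat.find_spec hex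
      have hwpos : v1 < Nat.find hex := by
        rcases lt_or_eq_of_le hwv1 with h | h
        · exact h
        · rw [← h] at hwZ; linarith
      obtain ⟨k, hk_eq⟩ : ∃ k, Nat.find hex = k + 1 := ⟨Nat.find hex - 1, by omega⟩
      have hk : v1 ≤ k := by omega
      have hkmin : Z k < z0 - 2 * η := by
        by_contra hkk
        push_neg at hkk
        exact Nat.find_min hex (show k < Nat.find hex by omega) ⟨hk, hkk⟩
      have hTk : T ≤ k := hTv1.trans hk
      have hpre : pre k ≤ z0 - η := by
        have hd := abs_le.1 (hdrift k hTk)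
        have hn := abs_le.1 (hnoise k hTk)
        rw [hpre_eq k]; linarith
      have hZk1 : Z (k + 1) ≤ z0 := by
        by_contra hkk
        push_neg at hkk
        have := hup k hTk hkk
        linarith
      have hwZ' : z0 - 2 * η ≤ Z (k + 1) := by rw [← hk_eq]; exact hwZ
      exact ⟨k + 1, by omega, abs_le.2 ⟨by linarith, by linarith⟩⟩
  -- Claim 3 : once in the band, stay in a slightly larger band
  have claim3 : ∀ u, T ≤ u → |Z u - z0| ≤ 2 * η → ∀ v, u ≤ v → |Z v - z0| ≤ 4 * η := by
    intro u hTu hu v hv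
    obtain ⟨hu1, hu2⟩ := abs_le.1 hu
    have hupper : ∀ v, u ≤ v → Z v ≤ z0 + 2 * η ∨ Z v - G v ≤ z0 + 7 * η / 2 - G u := by
      intro v hv
      induction v, hv using Nat.le_induction with
      | base => left; linarith
      | succ v hv ih =>
        by_cases hcase : Z (v + 1) ≤ z0 + 2 * η
        · left; exact hcase
        · right
          push_neg at hcase
          have hTv : T ≤ v := hTu.trans hv
          have hZle : Z (v + 1) ≤ pre v := hup v hTv (by linarith)
          rw [hpre_eq v] at hZle
          have hGv : |G v - G u| ≤ η / 2 := hTG u v hTu hTv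
          have hGv' := abs_le.1 hGv
          have h5 : N v = G (v + 1) - G v := by rw [hGs v]; ring
          rcases le_or_gt (Z v) (z0 + 2 * η) with hz | hz
          · have hd := abs_le.1 (hdrift v hTv)
            linarith
          · have ihr : Z v - G v ≤ z0 + 7 * η / 2 - G u := by
              rcases ih with h | h
              · linarith
              · exact h
            have hpos : 0 ≤ D v := by
              apply mul_nonneg (hγpos _).le
              apply pow_nonneg; linarith
            linarith
    have hlower : ∀ v, u ≤ v → z0 - 2 * η ≤ Z v ∨ z0 - 7 * η / 2 - G u ≤ Z v - G v := by
      intro v hv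
      induction v, hv using Nat.le_induction with
      | base => left; linarith
      | succ v hv ih =>
        by_cases hcase : z0 - 2 * η ≤ Z (v + 1)
        · left; exact hcase
        · right
          push_neg at hcase
          have hTv : T ≤ v := hTu.trans hv
          have hZge : pre v ≤ Z (v + 1) := hdn v hTv (by linarith)
          rw [hpre_eq v] at hZge
          have hGv := abs_le.1 (hTG u v hTu hTv)
          have h5 : N v = G (v + 1) - G v := by rw [hGs v]; ring
          rcases le_or_gt (z0 - 2 * η) (Z v) with hz | hz
          · have hd := abs_le.1 (hdrift v hTv)
            linarith
          · have ihr : z0 - 7 * η / 2 - G u ≤ Z v - G v := by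
              rcases ih with h | h
              · linarith
              · exact h
            have hneg : D v ≤ 0 := by
              apply mul_nonpos_of_nonneg_of_nonpos (hγpos _).le
              have : (Z v - z0) ^ l = -(z0 - Z v) ^ l := by
                rw [show Z v - z0 = -(z0 - Z v) by ring, hl.neg_pow]
              rw [this]
              exact neg_nonpos.mpr (pow_nonneg (by linarith) l)
            linarith
    have hGfin := abs_le.1 (hTG u v hTu (hTu.trans hv))
    have hub : Z v ≤ z0 + 4 * η := by
      rcases hupper v hv with h | h
      · linarith
      · linarith
    have hlb : z0 - 4 * η ≤ Z v := by
      rcases hlower v hv with h | h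
      · linarith
      · linarith
    exact abs_le.2 ⟨by linarith, by linarith⟩
  obtain ⟨u, hTu, hu⟩ := claim2
  refine ⟨u, fun n hn => ?_⟩
  have h := claim3 u hTu hu n hn
  rw [Real.dist_eq]
  have h45 : (4 : ℝ) * η < ε := by rw [hηdef]; linarith
  exact lt_of_le_of_lt h h45


lemma mart_conv {Ω : Type*} {m0 : MeasurableSpace Ω} (P : Measure Ω) [IsProbabilityMeasure P]
    (ℱ : Filtration ℕ m0)
    (ε : ℕ → Ω → ℝ)
    (hεmeas : ∀ t, StronglyMeasurable[ℱ (t + 1)] (ε (t + 1)))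
    (hεint : ∀ t, Integrable (ε (t + 1)) P)
    (hεsqint : ∀ t, Integrable (fun ω => (ε (t + 1) ω) ^ 2) P)
    (hεmd : ∀ t, P[ε (t + 1)|ℱ t] =ᵐ[P] 0)
    (γ : ℕ → ℝ)
    (hσ : ∀ᵐ ω ∂P, Summable fun t : ℕ =>
      (P[fun ω' => (ε (t + 1) ω') ^ 2|ℱ t]) ω * (γ (t + 1)) ^ 2) :
    ∀ᵐ ω ∂P, ∃ L, Tendsto (fun n => ∑ t ∈ Finset.range n, γ (t + 1) * ε (t + 1) ω)
      atTop (𝓝 L) := by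
  classical
  set g : ℕ → Ω → ℝ := fun t => P[fun ω' => (ε (t + 1) ω') ^ 2|ℱ t] with hgdef
  set Q : ℕ → Ω → ℝ := fun n ω => ∑ s ∈ Finset.range n, g s ω * (γ (s + 1)) ^ 2 with hQdef
  have hgSM : ∀ t, StronglyMeasurable[ℱ t] (g t) := fun t => stronglyMeasurable_condExp
  have hgint : ∀ t, Integrable (g t) P := fun t => integrable_condExp
  have hQSM : ∀ s n, n ≤ s + 1 → StronglyMeasurable[ℱ s] (fun ω => Q n ω) := by
    intro s n hn
    apply Finset.stronglyMeasurable_fun_sum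
    intro j hj
    rw [Finset.mem_range] at hj
    exact ((hgSM j).mono (ℱ.mono (by omega))).mul_const _
  have hg0 : ∀ᵐ ω ∂P, ∀ t, 0 ≤ g t ω := by
    rw [ae_all_iff]
    intro t
    exact condExp_nonneg (Eventually.of_forall fun ω => sq_nonneg _)
  -- the σ-algebra-measurable events where the predictable quadratic sum stays below K
  have hK : ∀ K : ℕ, ∀ᵐ ω ∂P, (∀ n, Q (n + 1) ω ≤ (K : ℝ)) →
      ∃ L, Tendsto (fun n => ∑ t ∈ Finset.range n, γ (t + 1) * ε (t + 1) ω) atTop (𝓝 L) := by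
    intro K
    set A : ℕ → Set Ω := fun t => ⋂ s ∈ Finset.range (t + 1), {ω | Q (s + 1) ω ≤ (K : ℝ)}
      with hAdef
    have memA : ∀ t ω, ω ∈ A t ↔ ∀ s ≤ t, Q (s + 1) ω ≤ (K : ℝ) := by
      intro t ω
      simp [hAdef, Set.mem_iInter, Nat.lt_succ_iff]
    have hAmeas : ∀ t, MeasurableSet[ℱ t] (A t) := by
      intro t
      apply Finset.measurableSet_biInter
      intro s hs
      rw [Finset.mem_range, Nat.lt_succ_iff] at hs
      exact measurableSet_le ((hQSM t (s + 1) (by omega)).measurable) measurable_const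
    set d : ℕ → Ω → ℝ := fun t ω => γ (t + 1) * ε (t + 1) ω with hddef
    have hdmem2 : ∀ t, MemLp (d t) 2 P := by
      intro t
      have hε2 : MemLp (ε (t + 1)) 2 P :=
        (memLp_two_iff_integrable_sq
          ((hεmeas t).mono (ℱ.le _)).aestronglyMeasurable).2 (hεsqint t)
      exact hε2.const_mul _
    have hd0 : ∀ t, P[d t|ℱ t] =ᵐ[P] 0 := by
      intro t
      have hsm := condExp_smul (μ := P) (m := ℱ t) (γ (t + 1)) (ε (t + 1))
      have hdd : d t = γ (t + 1) • ε (t + 1) := rfl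
      rw [hdd]
      refine hsm.trans ?_
      filter_upwards [hεmd t] with ω h
      simp [h]
    set f : ℕ → Ω → ℝ := fun t => (A t).indicator (d t) with hfdef
    have hfmem2 : ∀ t, MemLp (f t) 2 P := fun t =>
      MemLp.indicator ((ℱ.le t) _ (hAmeas t)) (hdmem2 t)
    have hfint : ∀ t, Integrable (f t) P := fun t => (hfmem2 t).integrable one_le_two
    have hfSM : ∀ t, StronglyMeasurable[ℱ (t + 1)] (f t) := fun t =>
      StronglyMeasurable.indicator ((hεmeas t).const_mul _)
        ((ℱ.mono (Nat.le_succ t)) _ (hAmeas t))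
    set M : ℕ → Ω → ℝ := fun n ω => ∑ t ∈ Finset.range n, f t ω with hMdef
    have hMSM : ∀ n, StronglyMeasurable[ℱ n] (M n) := by
      intro n
      apply Finset.stronglyMeasurable_fun_sum
      intro t ht
      rw [Finset.mem_range] at ht
      exact (hfSM t).mono (ℱ.mono (by omega))
    have hMint : ∀ n, Integrable (M n) P := fun n =>
      integrable_finset_sum _ fun t _ => hfint t
    have hMmem2 : ∀ n, MemLp (M n) 2 P := fun n =>
      memLp_finset_sum _ fun t _ => hfmem2 t
    -- conditional expectations of increments vanish
    have hf0 : ∀ t i, i ≤ t → P[f t|ℱ i] =ᵐ[P] 0 := by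
      intro t i hit
      have h1 : P[f t|ℱ t] =ᵐ[P] 0 := by
        have hind := condExp_indicator (m := ℱ t) ((hdmem2 t).integrable one_le_two) (hAmeas t)
        refine hind.trans ?_
        filter_upwards [hd0 t] with ω h
        rw [Set.indicator_apply]
        split
        · exact h
        · rfl
      have h2 : P[P[f t|ℱ t]|ℱ i] =ᵐ[P] P[f t|ℱ i] :=
        condExp_condExp_of_le (ℱ.mono hit) (ℱ.le t)
      refine h2.symm.trans ?_
      refine (condExp_congr_ae h1).trans ?_
      rw [condExp_zero]
    have hmart : Martingale M ℱ P := by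
      constructor
      · exact fun n => hMSM n
      · intro i j hij
        have hsplit : M j = fun ω => M i ω + ∑ t ∈ Finset.Ico i j, f t ω := by
          funext ω
          simp only [hMdef]
          rw [Finset.range_eq_Ico, Finset.range_eq_Ico]
          exact (Finset.sum_Ico_consecutive (fun t => f t ω) (Nat.zero_le i) hij).symm
        rw [hsplit]
        have hIco : Integrable (fun ω => ∑ t ∈ Finset.Ico i j, f t ω) P :=
          integrable_finset_sum _ fun t _ => hfint t
        refine (condExp_add (hMint i) hIco _).trans ?_
        rw [condExp_of_stronglyMeasurable (ℱ.le i) (hMSM i) (hMint i)]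
        have hB : P[fun ω => ∑ t ∈ Finset.Ico i j, f t ω|ℱ i] =ᵐ[P] 0 := by
          have hpi : (fun ω => ∑ t ∈ Finset.Ico i j, f t ω) = ∑ t ∈ Finset.Ico i j, f t := by
            funext ω; simp [Finset.sum_apply]
          rw [hpi]
          refine (condExp_finset_sum (fun t _ => hfint t) _).trans ?_
          have : ∀ t ∈ Finset.Ico i j, P[f t|ℱ i] =ᵐ[P] 0 := fun t ht =>
            hf0 t i (Finset.mem_Ico.1 ht).1
          calc ∑ t ∈ Finset.Ico i j, P[f t|ℱ i]
              =ᵐ[P] ∑ t ∈ Finset.Ico i j, (0 : Ω → ℝ) := by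
                apply eventuallyEq_sum
                intro t ht; exact this t ht
            _ = 0 := by simp
        filter_upwards [hB] with ω h2
        simp only [Pi.add_apply]
        rw [h2]
        simp
    -- L² bound on the stopped martingale
    have hMsq : ∀ n, Integrable (fun ω => (M n ω) ^ 2) P := fun n => (hMmem2 n).integrable_sq
    have hindint : ∀ t,
        Integrable ((A t).indicator (fun ω => g t ω * (γ (t + 1)) ^ 2)) P :=
      fun t => ((hgint t).mul_const _).indicator ((ℱ.le t) _ (hAmeas t))
    have hstep : ∀ n, ∫ ω, (M (n + 1) ω) ^ 2 ∂P =
        ∫ ω, (M n ω) ^ 2 ∂P +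
          ∫ ω, (A n).indicator (fun ω => g n ω * (γ (n + 1)) ^ 2) ω ∂P := by
      intro n
      have hMs : ∀ ω, M (n + 1) ω = M n ω + f n ω := by
        intro ω; simp only [hMdef]; exact Finset.sum_range_succ _ n
      have hfsq : Integrable (fun ω => (f n ω) ^ 2) P := (hfmem2 n).integrable_sq
      have hcross : Integrable (fun ω => M n ω * f n ω) P := by
        have h := (hfmem2 n).smul (r := 1) (hMmem2 n)
        have heq : (M n) • (f n) = fun ω => M n ω * f n ω := rfl
        rw [heq] at h
        exact memLp_one_iff_integrable.1 h
      have hcross0 : ∫ ω, M n ω * f n ω ∂P = 0 := by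
        set X : Ω → ℝ := (A n).indicator (M n) with hXdef
        have hXSM : StronglyMeasurable[ℱ n] X := (hMSM n).indicator (hAmeas n)
        have hXd : ∀ ω, X ω * d n ω = M n ω * f n ω := by
          intro ω
          by_cases hω : ω ∈ A n
          · simp [hXdef, hfdef, Set.indicator_of_mem hω]
          · simp [hXdef, hfdef, Set.indicator_of_notMem hω]
        have hXmem2 : MemLp X 2 P := MemLp.indicator ((ℱ.le n) _ (hAmeas n)) (hMmem2 n)
        have hXdint : Integrable (X * d n) P := by
          have h := (hdmem2 n).smul (r := 1) hXmem2
          exact memLp_one_iff_integrable.1 h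
        have hpull := condExp_mul_of_stronglyMeasurable_left hXSM hXdint
          ((hdmem2 n).integrable one_le_two)
        have hzero : P[X * d n|ℱ n] =ᵐ[P] 0 := by
          refine hpull.trans ?_
          filter_upwards [hd0 n] with ω h
          simp [h]
        have h1 : ∫ ω, M n ω * f n ω ∂P = ∫ ω, (X * d n) ω ∂P :=
          integral_congr_ae (Eventually.of_forall fun ω => (hXd ω).symm)
        rw [h1, ← integral_condExp (ℱ.le n) (f := X * d n), integral_congr_ae hzero]
        simp
      have hquad : ∫ ω, (f n ω) ^ 2 ∂P =
          ∫ ω, (A n).indicator (fun ω => g n ω * (γ (n + 1)) ^ 2) ω ∂P := by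
        have h1 : ∀ ω, (f n ω) ^ 2 = (A n).indicator (fun ω => (d n ω) ^ 2) ω := by
          intro ω
          by_cases hω : ω ∈ A n
          · simp [hfdef, Set.indicator_of_mem hω]
          · simp [hfdef, Set.indicator_of_notMem hω]
        rw [integral_congr_ae (Eventually.of_forall h1),
          integral_indicator ((ℱ.le n) _ (hAmeas n)),
          integral_indicator ((ℱ.le n) _ (hAmeas n))]
        have h2 : (fun ω => (d n ω) ^ 2) =
            fun ω => (γ (n + 1)) ^ 2 * (ε (n + 1) ω) ^ 2 := by
          funext ω; simp only [hddef]; ring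
        rw [h2, integral_const_mul]
        have h3 : ∫ x in A n, g n x ∂P = ∫ x in A n, (ε (n + 1) x) ^ 2 ∂P :=
          setIntegral_condExp (ℱ.le n) (hεsqint n) (hAmeas n)
        rw [← h3]
        have h4 : (fun ω => g n ω * (γ (n + 1)) ^ 2) =
            fun ω => (γ (n + 1)) ^ 2 * g n ω := by funext ω; ring
        rw [h4, integral_const_mul]
      have hexp : ∀ ω, (M (n + 1) ω) ^ 2 =
          (M n ω) ^ 2 + (2 * (M n ω * f n ω) + (f n ω) ^ 2) := by
        intro ω; rw [hMs ω]; ring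
      have hg2 : Integrable (fun ω => 2 * (M n ω * f n ω) + (f n ω) ^ 2) P :=
        (hcross.const_mul 2).add hfsq
      rw [integral_congr_ae (Eventually.of_forall hexp),
        integral_add (hMsq n) hg2,
        integral_add (hcross.const_mul 2) hfsq, integral_const_mul, hcross0, hquad]
      ring
    have hsum : ∀ n, ∫ ω, (M n ω) ^ 2 ∂P =
        ∑ t ∈ Finset.range n,
          ∫ ω, (A t).indicator (fun ω => g t ω * (γ (t + 1)) ^ 2) ω ∂P := by
      intro n
      induction n with
      | zero => simp [hMdef]
      | succ n ih => rw [hstep n, ih, Finset.sum_range_succ]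
    have hptbound : ∀ᵐ ω ∂P, ∀ n,
        ∑ t ∈ Finset.range n, (A t).indicator (fun ω => g t ω * (γ (t + 1)) ^ 2) ω
          ≤ (K : ℝ) := by
      filter_upwards [hg0] with ω hg0ω
      intro n
      induction n with
      | zero => simp
      | succ n ih =>
        by_cases hω : ω ∈ A n
        · have hall : ∀ t, t ≤ n → ω ∈ A t := by
            intro t ht
            rw [memA]
            intro s hs
            exact (memA n ω).1 hω s (hs.trans ht)
          have heq : ∑ t ∈ Finset.range (n + 1),
              (A t).indicator (fun ω => g t ω * (γ (t + 1)) ^ 2) ω = Q (n + 1) ω := by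
            apply Finset.sum_congr rfl
            intro t ht
            rw [Finset.mem_range, Nat.lt_succ_iff] at ht
            rw [Set.indicator_of_mem (hall t ht)]
          rw [heq]
          exact (memA n ω).1 hω n le_rfl
        · rw [Finset.sum_range_succ, Set.indicator_of_notMem hω]
          simpa using ih
    have hK2 : ∀ n, ∫ ω, (M n ω) ^ 2 ∂P ≤ (K : ℝ) := by
      intro n
      rw [hsum n, ← integral_finset_sum _ (fun t (_ : t ∈ Finset.range n) => hindint t)]
      calc ∫ ω, ∑ t ∈ Finset.range n,
              (A t).indicator (fun ω => g t ω * (γ (t + 1)) ^ 2) ω ∂P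
          ≤ ∫ _ω, (K : ℝ) ∂P := by
            apply integral_mono_ae
              (integrable_finset_sum _ fun t _ => hindint t) (integrable_const _)
            filter_upwards [hptbound] with ω h
            exact h n
        _ = (K : ℝ) := by simp
    have hbdd : ∀ n, eLpNorm (M n) 1 P ≤
        ((((K : ℝ) + 1) / 2).toNNReal : ℝ≥0∞) := by
      intro n
      have habs : ∫ ω, ‖M n ω‖ ∂P ≤ ((K : ℝ) + 1) / 2 := by
        have hptw : ∀ ω, ‖M n ω‖ ≤ ((M n ω) ^ 2 + 1) / 2 := by
          intro ω
          rw [Real.norm_eq_abs]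
          nlinarith [sq_abs (M n ω), sq_nonneg (|M n ω| - 1)]
        have h2 : Integrable (fun ω => ((M n ω) ^ 2 + 1) / 2) P :=
          ((hMsq n).add (integrable_const 1)).div_const 2
        calc ∫ ω, ‖M n ω‖ ∂P ≤ ∫ ω, ((M n ω) ^ 2 + 1) / 2 ∂P :=
              integral_mono (hMint n).norm h2 hptw
          _ = ((∫ ω, (M n ω) ^ 2 ∂P) + 1) / 2 := by
              rw [integral_div, integral_add (hMsq n) (integrable_const 1), integral_const]
              simp
          _ ≤ ((K : ℝ) + 1) / 2 := by have := hK2 n; linarith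
      have h5 : eLpNorm (M n) 1 P = ENNReal.ofReal (∫ ω, ‖M n ω‖ ∂P) := by
        rw [eLpNorm_one_eq_lintegral_enorm, ← ofReal_integral_norm_eq_lintegral_enorm (hMint n)]
      rw [h5]
      exact ENNReal.ofReal_le_ofReal habs
    have hconv := (hmart.submartingale).exists_ae_tendsto_of_bdd hbdd
    filter_upwards [hconv] with ω hc hQbd
    obtain ⟨c, hc⟩ := hc
    refine ⟨c, ?_⟩
    have heq : ∀ n, M n ω = ∑ t ∈ Finset.range n, γ (t + 1) * ε (t + 1) ω := by
      intro n
      apply Finset.sum_congr rfl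
      intro t _
      have hωA : ω ∈ A t := (memA t ω).2 fun s _ => hQbd s
      simp [hfdef, Set.indicator_of_mem hωA, hddef]
    exact Tendsto.congr heq hc
  -- combine over K
  have hallK := ae_all_iff.2 hK
  filter_upwards [hallK, hσ, hg0] with ω h1 h2 h3
  have hnn : ∀ t, 0 ≤ g t ω * (γ (t + 1)) ^ 2 := fun t => mul_nonneg (h3 t) (sq_nonneg _)
  set k := ∑' t, g t ω * (γ (t + 1)) ^ 2 with hkdef
  have hbd : ∀ n, Q (n + 1) ω ≤ ((⌈k⌉₊ : ℕ) : ℝ) := by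
    intro n
    have hle := Summable.sum_le_tsum (Finset.range (n + 1)) (fun t _ => hnn t) h2
    exact hle.trans (Nat.le_ceil k)
  exact h1 ⌈k⌉₊ hbd

/-- Let `l` be an odd positive integer, `z⁰ ∈ ℝ`, `R(z) = −(z − z⁰)^l`.  Let `α_t → ∞` and
`γ_t > 0` with `Σ γ_t = ∞` and `Σ α_{t−1}^{2l} γ_t² < ∞`, and let the martingale-difference
errors satisfy `Σ σ_t² γ_t² < ∞` a.s., where `σ_t² = E{ε_t² | 𝓕_{t−1}}`.  Then the truncated
procedure `Z_t = [Z_{t−1} + γ_t (R(Z_{t−1}) + ε_t)]_{−α_t}^{α_t}` converges a.s. to `z⁰`. -/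
theorem stmt_7 {Ω : Type*} {m0 : MeasurableSpace Ω} (P : Measure Ω) [IsProbabilityMeasure P]
    (ℱ : Filtration ℕ m0)
    (ε : ℕ → Ω → ℝ)
    (hεmeas : ∀ t, StronglyMeasurable[ℱ (t + 1)] (ε (t + 1)))
    (hεint : ∀ t, Integrable (ε (t + 1)) P)
    (hεsqint : ∀ t, Integrable (fun ω => (ε (t + 1) ω) ^ 2) P)
    (hεmd : ∀ t, P[ε (t + 1)|ℱ t] =ᵐ[P] 0)
    (l : ℕ) (hl : Odd l) (hlpos : 0 < l)
    (z0 : ℝ) (R : ℝ → ℝ) (hR : ∀ z, R z = -(z - z0) ^ l)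
    (α : ℕ → ℝ) (hαpos : ∀ t, 0 < α t) (hαlim : Tendsto α atTop atTop)
    (γ : ℕ → ℝ) (hγpos : ∀ t, 0 < γ t)
    (hγdiv : Tendsto (fun n => ∑ t ∈ Finset.range n, γ (t + 1)) atTop atTop)
    (hγconv : Summable fun t : ℕ => (α t) ^ (2 * l) * (γ (t + 1)) ^ 2)
    (hσ : ∀ᵐ ω ∂P, Summable fun t : ℕ =>
      (P[fun ω' => (ε (t + 1) ω') ^ 2|ℱ t]) ω * (γ (t + 1)) ^ 2)
    (Z : ℕ → Ω → ℝ)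
    (hZ : ∀ t ω, Z (t + 1) ω =
      truncate (-(α (t + 1))) (α (t + 1))
        (Z t ω + γ (t + 1) * (R (Z t ω) + ε (t + 1) ω))) :
    ∀ᵐ ω ∂P, Tendsto (fun t => Z t ω) atTop (𝓝 z0) := by
  have hmc := mart_conv P ℱ ε hεmeas hεint hεsqint hεmd γ hσ
  -- the deterministic drift bound tends to zero
  have hb : Tendsto (fun t => γ (t + 1) * (α t + |z0|) ^ l) atTop (𝓝 0) := by
    have h0 := hγconv.tendsto_atTop_zero
    have h2 : Tendsto (fun t => (4 : ℝ) ^ l * ((α t) ^ (2 * l) * (γ (t + 1)) ^ 2))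
        atTop (𝓝 0) := by
      simpa using h0.const_mul ((4 : ℝ) ^ l)
    have h1 : Tendsto
        (fun t => Real.sqrt ((4 : ℝ) ^ l * ((α t) ^ (2 * l) * (γ (t + 1)) ^ 2)))
        atTop (𝓝 0) := by
      simpa [Real.sqrt_zero] using h2.sqrt
    apply squeeze_zero' ?_ ?_ h1
    · filter_upwards with t
      have := hαpos t
      have := hγpos (t + 1)
      positivity
    · filter_upwards [hαlim.eventually_ge_atTop (max 1 |z0|)] with t ht
      have hα1 : (1 : ℝ) ≤ α t := le_trans (le_max_left _ _) ht
      have hαz : |z0| ≤ α t := le_trans (le_max_right _ _) ht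
      have hαt := hαpos t
      have e1 : (α t + |z0|) ^ l ≤ (2 * α t) ^ l :=
        pow_le_pow_left₀ (by positivity) (by linarith) l
      have e2 : γ (t + 1) * (α t + |z0|) ^ l ≤ γ (t + 1) * (2 * α t) ^ l :=
        mul_le_mul_of_nonneg_left e1 (hγpos _).le
      have e3 : (γ (t + 1) * (2 * α t) ^ l) ^ 2 =
          (4 : ℝ) ^ l * ((α t) ^ (2 * l) * (γ (t + 1)) ^ 2) := by
        have ha : ((2 * α t) ^ l) ^ 2 = (4 : ℝ) ^ l * (α t) ^ (2 * l) := by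
          rw [← pow_mul, mul_comm l 2, pow_mul,
            show (2 * α t) ^ 2 = 4 * (α t) ^ 2 by ring, mul_pow, ← pow_mul]
        calc (γ (t + 1) * (2 * α t) ^ l) ^ 2
            = ((2 * α t) ^ l) ^ 2 * (γ (t + 1)) ^ 2 := by ring
          _ = (4 : ℝ) ^ l * ((α t) ^ (2 * l) * (γ (t + 1)) ^ 2) := by rw [ha]; ring
      have e4 : γ (t + 1) * (2 * α t) ^ l =
          Real.sqrt ((4 : ℝ) ^ l * ((α t) ^ (2 * l) * (γ (t + 1)) ^ 2)) := by
        rw [← e3, Real.sqrt_sq (mul_nonneg (hγpos _).le (pow_nonneg (by linarith) l))]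
      calc γ (t + 1) * (α t + |z0|) ^ l ≤ γ (t + 1) * (2 * α t) ^ l := e2
        _ = _ := e4
  have hα0 : ∀ᶠ t in atTop, |z0| ≤ α t := hαlim.eventually_ge_atTop |z0|
  filter_upwards [hmc] with ω hGω
  apply det_conv l hl z0 α γ (fun t => ε t ω) (fun t => Z t ω)
    hαpos hγpos hγdiv hb hGω hα0
  intro t
  rw [hZ t ω, hR (Z t ω)]
end

section
/- For every fixed θ > 0 there exists a constant C (depending only on θ) such that for all u > 0, [ψ′(θ) + (ψ(θ) − ψ(u))²] / (ψ′(u)² (1 + (u − θ)²)) ≤ C (1 + log²(u)). -/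
open Real Filter Set Topology Finset

/-- The digamma function `ψ(x) = (d/dx) log Γ(x)`. -/
noncomputable def digamma (x : ℝ) : ℝ := deriv (fun y => Real.log (Real.Gamma y)) x

/-- The trigamma function `ψ′(x) = (d²/dx²) log Γ(x)`. -/
noncomputable def trigamma (x : ℝ) : ℝ := deriv digamma x

lemma aux_diff {x : ℝ} (hx : 0 < x) :
    DifferentiableAt ℝ (fun y => Real.log (Real.Gamma y)) x := by
  refine ((Real.differentiableAt_Gamma ?_).log (Real.Gamma_ne_zero ?_)) <;>
    exact fun m => ne_of_gt (by linarith [Nat.cast_nonneg (α := ℝ) m])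

lemma logGamma_rec {x : ℝ} (hx : 0 < x) :
    Real.log (Real.Gamma (x + 1)) = Real.log (Real.Gamma x) + Real.log x := by
  rw [Real.Gamma_add_one hx.ne', Real.log_mul hx.ne' (Real.Gamma_pos_of_pos hx).ne', add_comm]

lemma digamma_rec {x : ℝ} (hx : 0 < x) : digamma (x + 1) = digamma x + x⁻¹ := by
  unfold digamma
  rw [← deriv_comp_add_const, ← Real.deriv_log, ← deriv_add (aux_diff hx)
    (Real.differentiableAt_log hx.ne')]
  apply Filter.EventuallyEq.deriv_eq
  filter_upwards [eventually_gt_nhds hx] with y hy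
  exact logGamma_rec hy

lemma digamma_le_log {x : ℝ} (hx : 0 < x) : digamma x ≤ Real.log x := by
  have h := Real.convexOn_log_Gamma.deriv_le_slope (Set.mem_Ioi.mpr hx)
    (Set.mem_Ioi.mpr (by linarith : (0:ℝ) < x + 1)) (lt_add_one x) (aux_diff hx)
  simp only [slope_def_field, add_sub_cancel_left, div_one, Function.comp_def] at h
  rwa [logGamma_rec hx, add_sub_cancel_left] at h

lemma log_le_digamma {x : ℝ} (hx : 0 < x) : Real.log x - x⁻¹ ≤ digamma x := by
  have h := Real.convexOn_log_Gamma.slope_le_deriv (Set.mem_Ioi.mpr hx)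
    (Set.mem_Ioi.mpr (by linarith : (0:ℝ) < x + 1)) (lt_add_one x)
    (aux_diff (by linarith : (0:ℝ) < x + 1))
  simp only [slope_def_field, add_sub_cancel_left, div_one, Function.comp_def] at h
  rw [logGamma_rec hx, add_sub_cancel_left] at h
  have h3 : Real.log x ≤ digamma (x + 1) := h
  have h2 := digamma_rec hx
  linarith

lemma base_summable : Summable (fun k : ℕ => (((k : ℝ) + 1) ^ 2)⁻¹) := by
  have := Real.summable_one_div_nat_pow.mpr (le_refl 2)
  rw [← summable_nat_add_iff 1] at this
  refine this.congr fun k => ?_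
  push_cast
  rw [one_div]

lemma sq_summable {c : ℝ} (hc : 0 < c) : Summable (fun k : ℕ => ((c + (k : ℝ)) ^ 2)⁻¹) := by
  set m := min c 1 with hm
  have hm0 : 0 < m := lt_min hc one_pos
  refine Summable.of_nonneg_of_le (fun k => by positivity)
    (fun k => ?_) ((base_summable).mul_left (m ^ 2)⁻¹)
  have hk : m * ((k : ℝ) + 1) ≤ c + k := by
    have h1 : m ≤ c := min_le_left _ _
    have h2 : m * (k : ℝ) ≤ 1 * k :=
      mul_le_mul_of_nonneg_right (min_le_right _ _) (Nat.cast_nonneg k)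
    nlinarith [Nat.cast_nonneg (α := ℝ) k]
  have hpos : (0:ℝ) < m * ((k : ℝ) + 1) := by positivity
  rw [← mul_inv]
  rw [← mul_pow]
  exact inv_anti₀ (by positivity) (by nlinarith)

/-- The series `S x = ∑ (1/(k+1) - 1/(x+k))`, equal to `digamma x + γ`. -/
noncomputable def Sdig (x : ℝ) : ℝ := ∑' k : ℕ, (((k : ℝ) + 1)⁻¹ - (x + k)⁻¹)

lemma term_eq {x : ℝ} (hx : 0 < x) (k : ℕ) :
    ((k : ℝ) + 1)⁻¹ - (x + k)⁻¹ = (x - 1) * ((((k : ℝ) + 1) * (x + k))⁻¹) := by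
  have h1 : ((k : ℝ) + 1) ≠ 0 := by positivity
  have h2 : (x + (k : ℝ)) ≠ 0 := by positivity
  field_simp
  ring

lemma term_bound {x : ℝ} (hx : 0 < x) (k : ℕ) :
    ‖((k : ℝ) + 1)⁻¹ - (x + k)⁻¹‖ ≤ (|x - 1| * (min x 1)⁻¹) * (((k : ℝ) + 1) ^ 2)⁻¹ := by
  set m := min x 1 with hm
  have hm0 : 0 < m := lt_min hx one_pos
  rw [term_eq hx k, norm_mul, Real.norm_eq_abs, Real.norm_eq_abs, mul_assoc]
  refine mul_le_mul_of_nonneg_left ?_ (abs_nonneg _)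
  have hk : m * ((k : ℝ) + 1) ≤ x + k := by
    have h2 : m * (k : ℝ) ≤ 1 * k :=
      mul_le_mul_of_nonneg_right (min_le_right _ _) (Nat.cast_nonneg k)
    nlinarith [Nat.cast_nonneg (α := ℝ) k, min_le_left x 1]
  have hpos : (0:ℝ) < ((k : ℝ) + 1) * (x + k) := by positivity
  rw [abs_of_pos (inv_pos.mpr hpos), ← mul_inv]
  refine inv_anti₀ (by positivity) ?_
  have : m * (((k:ℝ)+1) * ((k:ℝ)+1)) ≤ ((k:ℝ)+1) * (x + k) := by
    nlinarith [Nat.cast_nonneg (α := ℝ) k]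
  calc m * ((k:ℝ)+1)^2 = m * (((k:ℝ)+1) * ((k:ℝ)+1)) := by ring
  _ ≤ _ := this

lemma Sdig_summable {x : ℝ} (hx : 0 < x) :
    Summable (fun k : ℕ => (((k : ℝ) + 1)⁻¹ - (x + k)⁻¹)) := by
  refine Summable.of_norm_bounded ((base_summable).mul_left (|x - 1| * (min x 1)⁻¹))
    (term_bound hx)

lemma hasDerivAt_logGammaSeq {x : ℝ} (hx : 0 < x) (n : ℕ) :
    HasDerivAt (fun y => Real.BohrMollerup.logGammaSeq y n)
      (Real.log n - ∑ m ∈ Finset.range (n + 1), (x + m)⁻¹) x := by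
  have h1 : HasDerivAt (fun y : ℝ => y * Real.log n) (Real.log n) x := by
    simpa using (hasDerivAt_id x).mul_const (Real.log n)
  have h2 : HasDerivAt (fun y : ℝ => ∑ m ∈ Finset.range (n + 1), Real.log (y + m))
      (∑ m ∈ Finset.range (n + 1), (x + m)⁻¹) x := by
    apply HasDerivAt.fun_sum
    intro m _
    have hm : (0:ℝ) < x + m := by positivity
    have := ((hasDerivAt_id x).add_const (m : ℝ)).log hm.ne'
    simpa [one_div] using this
  have := (h1.add_const (Real.log (Nat.factorial n))).sub h2
  simp only [Real.BohrMollerup.logGammaSeq]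
  exact this

lemma tendsto_cseq :
    Tendsto (fun n : ℕ => Real.log n - ∑ m ∈ Finset.range (n + 1), ((m : ℝ) + 1)⁻¹)
      atTop (𝓝 (-Real.eulerMascheroniConstant)) := by
  have hsum : ∀ n : ℕ, ∑ m ∈ Finset.range (n + 1), ((m : ℝ) + 1)⁻¹ = ((harmonic (n+1) : ℚ) : ℝ) := by
    intro n
    rw [harmonic]
    push_cast
    rfl
  have h1 : Tendsto (fun n : ℕ => ((harmonic (n+1) : ℚ) : ℝ) - Real.log ((n:ℝ) + 1)) atTop
      (𝓝 Real.eulerMascheroniConstant) := by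
    have := Real.tendsto_harmonic_sub_log.comp (tendsto_add_atTop_nat 1)
    refine this.congr fun n => ?_
    simp [Function.comp]
  have h2 : Tendsto (fun n : ℕ => Real.log ((n:ℝ) + 1) - Real.log n) atTop (𝓝 0) := by
    have hb : Tendsto (fun n : ℕ => Real.log (1 + 1 / (n:ℝ))) atTop (𝓝 0) := by
      have hc : Tendsto (fun n : ℕ => 1 + 1 / (n:ℝ)) atTop (𝓝 1) := by
        simpa using tendsto_const_nhds.add (tendsto_one_div_atTop_nhds_zero_nat (𝕜 := ℝ))
      simpa [Function.comp_def] using (Real.continuousAt_log one_ne_zero).tendsto.comp hc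
    apply hb.congr'
    filter_upwards [eventually_gt_atTop 0] with n hn
    have hn' : (0:ℝ) < n := by exact_mod_cast hn
    rw [← Real.log_div (by positivity) hn'.ne']
    congr 1
    field_simp
  have := ((h1.add h2).neg)
  simp only [neg_zero, add_zero] at this
  refine this.congr fun n => ?_
  rw [hsum]
  ring

lemma digamma_eq {x : ℝ} (hx : 0 < x) :
    digamma x = -Real.eulerMascheroniConstant + Sdig x := by
  have ha : (0:ℝ) < x / 2 := by positivity
  have hm0 : (0:ℝ) < min (x/2) 1 := lt_min ha one_pos
  have hxs : x ∈ Ioo (x/2) (x+1) := ⟨by linarith, by linarith⟩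
  have key : HasDerivAt (fun y => Real.log (Real.Gamma y))
      (-Real.eulerMascheroniConstant + Sdig x) x := by
    refine hasDerivAt_of_tendstoUniformlyOn (l := atTop) (isOpen_Ioo (a := x/2) (b := x+1))
      (f := fun n (y : ℝ) => Real.BohrMollerup.logGammaSeq y n)
      (f' := fun n (y : ℝ) => (Real.log n - ∑ m ∈ Finset.range (n + 1), ((m : ℝ) + 1)⁻¹)
          + ∑ m ∈ Finset.range (n + 1), (((m : ℝ) + 1)⁻¹ - (y + m)⁻¹))
      (g' := fun y => -Real.eulerMascheroniConstant + Sdig y) ?_ ?_ ?_ hxs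
    · -- uniform convergence of derivatives
      have hconst : TendstoUniformlyOn
          (fun (n : ℕ) (_ : ℝ) => Real.log n - ∑ m ∈ Finset.range (n + 1), ((m : ℝ) + 1)⁻¹)
          (fun _ => -Real.eulerMascheroniConstant) atTop (Ioo (x/2) (x+1)) :=
        tendsto_cseq.tendstoUniformlyOn_const _
      have hb : Summable (fun k : ℕ => ((x + 2) * (min (x/2) 1)⁻¹) * (((k : ℝ) + 1) ^ 2)⁻¹) :=
        base_summable.mul_left _
      have hbound : ∀ (k : ℕ) (y : ℝ), y ∈ Ioo (x/2) (x+1) →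
          ‖((k : ℝ) + 1)⁻¹ - (y + k)⁻¹‖ ≤ ((x + 2) * (min (x/2) 1)⁻¹) * (((k : ℝ) + 1) ^ 2)⁻¹ := by
        intro k y hy
        have hy0 : (0:ℝ) < y := by linarith [hy.1]
        refine (term_bound hy0 k).trans ?_
        refine mul_le_mul_of_nonneg_right ?_ (by positivity)
        refine mul_le_mul ?_ ?_ (le_of_lt (inv_pos.mpr (lt_min hy0 one_pos))) (by linarith)
        · rw [abs_le]; constructor <;> [linarith [hy.1]; linarith [hy.2]]
        · refine inv_anti₀ hm0 ?_
          exact min_le_min (le_of_lt hy.1) le_rfl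
      have hsumU := tendstoUniformlyOn_tsum_nat hb hbound
      have hsumU' : TendstoUniformlyOn
          (fun n (y : ℝ) => ∑ m ∈ Finset.range (n + 1), (((m : ℝ) + 1)⁻¹ - (y + m)⁻¹))
          (fun y => Sdig y) atTop (Ioo (x/2) (x+1)) :=
        fun v hv => (tendsto_add_atTop_nat 1).eventually (hsumU v hv)
      have := hconst.add hsumU'
      exact this
    · filter_upwards with n
      intro y hy
      have hy0 : (0:ℝ) < y := lt_trans ha hy.1
      have h := hasDerivAt_logGammaSeq hy0 n
      refine h.congr_deriv ?_
      rw [Finset.sum_sub_distrib]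
      ring
    · intro y hy
      exact Real.BohrMollerup.tendsto_log_gamma (lt_trans ha hy.1)
  rw [digamma, key.deriv]

lemma hasDerivAt_Sdig {u : ℝ} (hu : 0 < u) :
    HasDerivAt Sdig (∑' k : ℕ, ((u + (k : ℝ)) ^ 2)⁻¹) u := by
  have h2 : (0:ℝ) < u / 2 := by positivity
  have key := hasDerivAt_tsum_of_isPreconnected
    (u := fun k : ℕ => ((u / 2 + (k : ℝ)) ^ 2)⁻¹)
    (g := fun (k : ℕ) (y : ℝ) => ((k : ℝ) + 1)⁻¹ - (y + k)⁻¹)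
    (g' := fun (k : ℕ) (y : ℝ) => ((y + (k : ℝ)) ^ 2)⁻¹)
    (sq_summable h2) (isOpen_Ioi (a := u / 2)) (isPreconnected_Ioi)
    (fun n y hy => ?_) (fun n y hy => ?_) (Set.mem_Ioi.mpr (by linarith : u / 2 < u))
    (Sdig_summable hu) (Set.mem_Ioi.mpr (by linarith : u / 2 < u))
  · exact key
  · -- HasDerivAt of the term
    have hy0 : (0:ℝ) < y + n := by
      have h1 := Set.mem_Ioi.mp hy
      have h2 := Nat.cast_nonneg (α := ℝ) n
      linarith
    have hinv : HasDerivAt (fun x : ℝ => (x + (n:ℝ))⁻¹) (-((y + n) ^ 2)⁻¹) y := by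
      have := ((hasDerivAt_id y).add_const (n : ℝ)).inv hy0.ne'
      refine this.congr_deriv ?_
      simp only [id]
      field_simp
    have := hinv.const_sub (((n : ℝ) + 1)⁻¹)
    convert this using 1
    ring
  · -- norm bound
    have hy' := Set.mem_Ioi.mp hy
    have hy0 : (0:ℝ) < y + n := by
      have h2 := Nat.cast_nonneg (α := ℝ) n
      linarith
    rw [Real.norm_eq_abs, abs_of_pos (by positivity)]
    refine inv_anti₀ (by positivity) ?_
    have : u / 2 + (n:ℝ) ≤ y + n := by linarith
    nlinarith [Nat.cast_nonneg (α := ℝ) n]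

lemma trigamma_eq {u : ℝ} (hu : 0 < u) :
    trigamma u = ∑' k : ℕ, ((u + (k : ℝ)) ^ 2)⁻¹ := by
  have heq : digamma =ᶠ[nhds u] (fun x => -Real.eulerMascheroniConstant + Sdig x) := by
    filter_upwards [Ioi_mem_nhds hu] with y hy
    exact digamma_eq (Set.mem_Ioi.mp hy)
  rw [trigamma, heq.deriv_eq]
  exact ((hasDerivAt_Sdig hu).const_add (-Real.eulerMascheroniConstant)).deriv

lemma inv_le_trigamma {u : ℝ} (hu : 0 < u) : u⁻¹ ≤ trigamma u := by
  rw [trigamma_eq hu]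
  have htel : HasSum (fun k : ℕ => ((u + (k : ℝ))⁻¹ - (u + ((k : ℕ) + 1 : ℕ))⁻¹)) u⁻¹ := by
    have hnn : ∀ k : ℕ, 0 ≤ (u + (k : ℝ))⁻¹ - (u + ((k : ℕ) + 1 : ℕ))⁻¹ := by
      intro k
      have h1 : (0:ℝ) < u + k := by positivity
      have h2 : (u + (k:ℝ)) ≤ u + ((k : ℕ) + 1 : ℕ) := by push_cast; linarith
      have := inv_anti₀ h1 h2
      linarith
    rw [hasSum_iff_tendsto_nat_of_nonneg hnn]
    have hps : ∀ n : ℕ, ∑ k ∈ Finset.range n, ((u + (k : ℝ))⁻¹ - (u + ((k : ℕ) + 1 : ℕ))⁻¹)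
        = u⁻¹ - (u + (n : ℝ))⁻¹ := by
      intro n
      have := Finset.sum_range_sub' (f := fun k : ℕ => (u + (k : ℝ))⁻¹) n
      simpa using this
    simp only [hps]
    have : Tendsto (fun n : ℕ => (u + (n : ℝ))⁻¹) atTop (𝓝 0) := by
      apply Filter.Tendsto.comp tendsto_inv_atTop_zero
      exact tendsto_atTop_add_const_left atTop u tendsto_natCast_atTop_atTop
    simpa using tendsto_const_nhds.sub this
  rw [← htel.tsum_eq]
  refine Summable.tsum_le_tsum (fun k => ?_) htel.summable (sq_summable hu)
  have h1 : (0:ℝ) < u + k := by positivity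
  have h2 : (0:ℝ) < u + ((k : ℕ) + 1 : ℕ) := by positivity
  have key : (u + (k : ℝ))⁻¹ - (u + ((k : ℕ) + 1 : ℕ))⁻¹ = ((u + k) * (u + ((k : ℕ) + 1 : ℕ)))⁻¹ := by
    push_cast
    field_simp
    ring
  rw [key]
  refine inv_anti₀ (by positivity) ?_
  push_cast
  nlinarith [Nat.cast_nonneg (α := ℝ) k]

lemma abs_digamma_le {u : ℝ} (hu : 0 < u) : |digamma u| ≤ |Real.log u| + u⁻¹ := by
  have h1 := digamma_le_log hu
  have h2 := log_le_digamma hu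
  have h3 : (0:ℝ) < u⁻¹ := by positivity
  rw [abs_le]
  constructor
  · have := neg_abs_le (Real.log u)
    linarith
  · have := le_abs_self (Real.log u)
    linarith

set_option maxHeartbeats 1000000 in
/-- For every fixed `θ > 0` there exists a constant `C` (depending only on `θ`) such that
for all `u > 0`,
`[ψ′(θ) + (ψ(θ) − ψ(u))²] / (ψ′(u)² (1 + (u − θ)²)) ≤ C (1 + log²(u))`. -/
theorem stmt_14 (θ : ℝ) (hθ : 0 < θ) :
    ∃ C : ℝ, ∀ u : ℝ, 0 < u →
      (trigamma θ + (digamma θ - digamma u) ^ 2) /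
          ((trigamma u) ^ 2 * (1 + (u - θ) ^ 2)) ≤
        C * (1 + (Real.log u) ^ 2) := by
  set K : ℝ := |digamma θ| with hK
  set A : ℝ := trigamma θ with hA
  have hA0 : 0 < A := lt_of_lt_of_le (by positivity) (inv_le_trigamma hθ)
  refine ⟨2 * (θ^2 + 1) * (A + 3 * K^2 + 3) + 3, fun u hu => ?_⟩
  set L : ℝ := Real.log u with hL
  set v : ℝ := u⁻¹ with hv
  have hv0 : 0 < v := by positivity
  have huv : u * v = 1 := mul_inv_cancel₀ hu.ne'
  set w : ℝ := (u - θ)^2 with hw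
  have hw0 : 0 ≤ w := sq_nonneg _
  set N : ℝ := A + (digamma θ - digamma u) ^ 2 with hN
  have hN0 : 0 ≤ N := by positivity
  -- lower bound on denominator
  have htri : v ≤ trigamma u := inv_le_trigamma hu
  have hD : v^2 * (1 + w) ≤ (trigamma u)^2 * (1 + w) := by
    have : v^2 ≤ (trigamma u)^2 := by nlinarith
    nlinarith
  have hD'0 : 0 < v^2 * (1 + w) := by positivity
  -- numerator bound
  have hdig : |digamma θ - digamma u| ≤ K + |L| + v := by
    have h1 := abs_digamma_le hu
    calc |digamma θ - digamma u| ≤ |digamma θ| + |digamma u| := abs_sub _ _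
    _ ≤ K + (|L| + v) := by rw [hK]; exact add_le_add le_rfl h1
    _ = K + |L| + v := by ring
  have hsq : (digamma θ - digamma u)^2 ≤ (K + |L| + v)^2 := by
    rw [← sq_abs (digamma θ - digamma u)]
    exact pow_le_pow_left₀ (abs_nonneg _) hdig 2
  have hN2 : N ≤ A + 3 * K^2 + 3 * L^2 + 3 * v^2 := by
    have h3 : (K + |L| + v)^2 ≤ 3*K^2 + 3*L^2 + 3*v^2 := by
      have hL2 : |L|^2 = L^2 := sq_abs L
      nlinarith [sq_nonneg (K - |L|), sq_nonneg (K - v), sq_nonneg (|L| - v)]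
    rw [hN]
    linarith
  -- key geometric fact
  have h1 : 1 ≤ 2 * (θ^2 + 1) * (1 + w) * v^2 := by
    have hu2 : u^2 ≤ 2 * (θ^2 + 1) * (1 + w) := by nlinarith [sq_nonneg (u - 2*θ)]
    calc (1:ℝ) = u^2 * v^2 := by rw [← mul_pow, huv]; norm_num
    _ ≤ (2 * (θ^2 + 1) * (1 + w)) * v^2 := by nlinarith
    _ = 2 * (θ^2 + 1) * (1 + w) * v^2 := by ring
  clear_value K A L v w N
  calc N / ((trigamma u)^2 * (1 + w))
      ≤ N / (v^2 * (1 + w)) := by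
        exact div_le_div_of_nonneg_left hN0 hD'0 hD
    _ ≤ (2 * (θ^2 + 1) * (A + 3 * K^2 + 3) + 3) * (1 + L^2) := by
        rw [div_le_iff₀ hD'0]
        have hX0 : (0:ℝ) ≤ (A + 3*K^2 + 3) * (1 + L^2) :=
          mul_nonneg (by nlinarith [sq_nonneg K]) (by positivity)
        have e1 : A + 3*K^2 + 3*L^2 ≤ (A + 3*K^2 + 3) * (1 + L^2) := by
          nlinarith [sq_nonneg K, sq_nonneg L, mul_nonneg (sq_nonneg K) (sq_nonneg L)]
        have e2 : (A + 3*K^2 + 3) * (1 + L^2) ≤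
            (A + 3*K^2 + 3) * (1 + L^2) * (2 * (θ^2 + 1) * (1 + w) * v^2) :=
          le_mul_of_one_le_right hX0 h1
        have e3 : 3 * v^2 ≤ 3 * (1 + L^2) * (v^2 * (1 + w)) := by
          nlinarith [mul_nonneg (sq_nonneg v) (sq_nonneg L), mul_nonneg (sq_nonneg v) hw0,
            mul_nonneg (mul_nonneg (sq_nonneg v) (sq_nonneg L)) hw0]
        have e4 := e1.trans e2
        nlinarith [hN2, e3, e4]
end
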